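/- Let c ∈ ℂ with c ≠ 0 and define W_c(x,y) = (−cx(xy−x−y)/(xy+cx−y), −y(xy−x−y)/(cxy−cx+y)). Then for all (x,y) ∈ ℂ² at which every denominator occurring below is nonzero, W_{1/c}(W_c(x,y)) = (x,y); i.e., the birational map w_{β₁}: (x,y;c) ↦ (W_c(x,y); 1/c) is an involution. -/

import Mathlib

open Complex

/-- The reflection `w_{β₁}` with parameter `c`:
    `W_c(x,y) = (−cx(xy−x−y)/(xy+cx−y), −y(xy−x−y)/(cxy−cx+y))`. -/
noncomputable def Wbeta (c : ℂ) (p : ℂ × ℂ) : ℂ × ℂ :=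
  (-c * p.1 * (p.1 * p.2 - p.1 - p.2) / (p.1 * p.2 + c * p.1 - p.2),
   -p.2 * (p.1 * p.2 - p.1 - p.2) / (c * p.1 * p.2 - c * p.1 + p.2))

theorem stmt_14 (c x y : ℂ) (hc : c ≠ 0)
    (hd1 : x * y + c * x - y ≠ 0)
    (hd2 : c * x * y - c * x + y ≠ 0)
    (hd3 : (Wbeta c (x, y)).1 * (Wbeta c (x, y)).2 + (1 / c) * (Wbeta c (x, y)).1 -
      (Wbeta c (x, y)).2 ≠ 0)
    (hd4 : (1 / c) * (Wbeta c (x, y)).1 * (Wbeta c (x, y)).2 -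
      (1 / c) * (Wbeta c (x, y)).1 + (Wbeta c (x, y)).2 ≠ 0) :
    Wbeta (1 / c) (Wbeta c (x, y)) = (x, y) := by
  simp only [Wbeta] at *
  have e1 : x * (y + c) - y ≠ 0 := by intro h; apply hd1; linear_combination h
  have e2 : c * x * (y - 1) + y ≠ 0 := by intro h; apply hd2; linear_combination h
  field_simp at hd3 hd4 ⊢
  have h3 := (div_ne_zero_iff.mp hd3).1
  have h4 := (div_ne_zero_iff.mp hd4).1
  refine Prod.ext ?_ ?_
  · simp only
    rw [div_eq_iff (mul_ne_zero e1 (right_ne_zero_of_mul h3))]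
    ring
  · simp only
    rw [div_eq_iff (mul_ne_zero e2 (right_ne_zero_of_mul h4))]
    ring
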